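/- Let f be a weakly ε-modular set function over n items, let M = max_{S ⊆ U} |f(S)|, and suppose the zero function is a closest linear function to f, i.e., for every linear set function g it holds that max_{S ⊆ U} |f(S)−g(S)| ≥ M. Then there exists a positive integer k' such that for every positive integer multiple k of k' there exists a multiset 𝒢 of 2k subsets of U (the same set may appear multiple times, with appearances counted with multiplicity) such that: (1) every item i ∈ U belongs to exactly k members of 𝒢; and (2) the average deficit of 𝒢 plus the average surplus of the complement multiset is at most ε, i.e., ∑_{S ∈ 𝒢} [(M − f(S)) + (M + f(U∖S))] ≤ 2kε. -/

import Mathlib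

open Finset

/-- `f` is weakly ε-modular: the modularity equation holds up to ε for disjoint pairs. -/
def IsWeaklyModular {n : ℕ} (f : Finset (Fin n) → ℝ) (ε : ℝ) : Prop :=
  ∀ S T : Finset (Fin n), Disjoint S T → |f S + f T - f (S ∪ T) - f (S ∩ T)| ≤ ε

/-- `f` is linear: `f(S) = c₀ + ∑_{i ∈ S} cᵢ` for some constants. -/
def IsLinear {n : ℕ} (f : Finset (Fin n) → ℝ) : Prop :=
  ∃ (c₀ : ℝ) (c : Fin n → ℝ), ∀ S : Finset (Fin n), f S = c₀ + ∑ i ∈ S, c i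

section Helpers

lemma swap_helper {R : Type*} [CommSemiring R] {ι : Type*} [Fintype ι] {m : ℕ}
    (c : ι → R) (a : ι → R) (g : ι → Fin m → R) (e : Fin m → R) :
    ∑ p, c p * (a p + ∑ j, g p j * e j)
      = (∑ p, c p * a p) + ∑ j, (∑ p, c p * g p j) * e j := by
  simp only [mul_add, Finset.sum_add_distrib, Finset.mul_sum, Finset.sum_mul]
  congr 1
  rw [Finset.sum_comm]
  apply Finset.sum_congr rfl
  intro j _
  apply Finset.sum_congr rfl
  intro p _
  ring

lemma msum_card {α β : Type*} (s : Finset α) (g : α → Multiset β) :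
    Multiset.card (∑ a ∈ s, g a) = ∑ a ∈ s, Multiset.card (g a) := by
  induction s using Finset.cons_induction with
  | empty => simp
  | cons a s ha ih => rw [Finset.sum_cons, Finset.sum_cons, Multiset.card_add, ih]

lemma msum_filter {α β : Type*} (s : Finset α) (g : α → Multiset β)
    (pred : β → Prop) [DecidablePred pred] :
    (∑ a ∈ s, g a).filter pred = ∑ a ∈ s, (g a).filter pred := by
  induction s using Finset.cons_induction with
  | empty => simp
  | cons a s ha ih => rw [Finset.sum_cons, Finset.sum_cons, Multiset.filter_add, ih]

lemma msum_map {α β γ : Type*} (s : Finset α) (g : α → Multiset β) (h : β → γ) :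
    (∑ a ∈ s, g a).map h = ∑ a ∈ s, (g a).map h := by
  induction s using Finset.cons_induction with
  | empty => simp
  | cons a s ha ih => rw [Finset.sum_cons, Finset.sum_cons, Multiset.map_add, ih]

lemma msum_sum {α β : Type*} [AddCommMonoid β] (s : Finset α) (g : α → Multiset β) :
    (∑ a ∈ s, g a).sum = ∑ a ∈ s, (g a).sum := by
  induction s using Finset.cons_induction with
  | empty => simp
  | cons a s ha ih => rw [Finset.sum_cons, Finset.sum_cons, Multiset.sum_add, ih]

lemma mfilter_replicate {β : Type*} (n : ℕ) (a : β) (pred : β → Prop) [DecidablePred pred] :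
    (Multiset.replicate n a).filter pred = if pred a then Multiset.replicate n a else 0 := by
  induction n with
  | zero => simp
  | succ n ih => rw [Multiset.replicate_succ, Multiset.filter_cons]; split_ifs <;> simp_all

end Helpers

section Decomp

/-- Every finite family of reals decomposes as a rational part plus rational combinations
of reals `e j` such that `(1, e)` is linearly independent over `ℚ`. -/
lemma rat_decomp {ι : Type*} [Fintype ι] (x : ι → ℝ) :
    ∃ (m : ℕ) (e : Fin m → ℝ) (q0 : ι → ℚ) (q : ι → Fin m → ℚ),
      (∀ p, x p = (q0 p : ℝ) + ∑ j, (q p j : ℝ) * e j) ∧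
      ∀ (c : ℚ) (d : Fin m → ℚ), (c : ℝ) + ∑ j, (d j : ℝ) * e j = 0 →
        c = 0 ∧ ∀ j, d j = 0 := by
  classical
  set W : Submodule ℚ ℝ := Submodule.span ℚ (insert (1 : ℝ) (Set.range x)) with hWdef
  haveI : FiniteDimensional ℚ W :=
    FiniteDimensional.span_of_finite ℚ ((Set.finite_range x).insert 1)
  have h1 : (1 : ℝ) ∈ W := Submodule.subset_span (Set.mem_insert _ _)
  have hxW : ∀ p, x p ∈ W := fun p =>
    Submodule.subset_span (Set.mem_insert_of_mem _ (Set.mem_range_self p))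
  set u : W := ⟨1, h1⟩ with hudef
  have hu : u ≠ 0 := by
    intro h
    have : (1 : ℝ) = 0 := congrArg Subtype.val h
    norm_num at this
  obtain ⟨C, hC⟩ := Submodule.exists_isCompl (ℚ ∙ u)
  haveI : FiniteDimensional ℚ C := inferInstance
  set m := Module.finrank ℚ C with hm
  set B : Module.Basis (Fin m) ℚ C := Module.finBasis ℚ C with hB
  have hdec : ∀ p, ∃ (r : ℚ) (v : C), (⟨x p, hxW p⟩ : W) = r • u + (v : W) := by
    intro p
    have hmem : (⟨x p, hxW p⟩ : W) ∈ (ℚ ∙ u) ⊔ C := by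
      rw [hC.sup_eq_top]; trivial
    obtain ⟨y, hy, z, hz, hyz⟩ := Submodule.mem_sup.mp hmem
    obtain ⟨r, hr⟩ := Submodule.mem_span_singleton.mp hy
    exact ⟨r, ⟨z, hz⟩, by rw [hr, hyz]⟩
  choose r v hrv using hdec
  refine ⟨m, fun j => ((B j : W) : ℝ), r, fun p j => B.repr (v p) j, ?_, ?_⟩
  · intro p
    have h1 : ((r p • u + (v p : W) : W) : ℝ) = x p := by rw [← hrv p]
    have h2 : ((v p : W) : ℝ) = ∑ j, ((B.repr (v p) j : ℚ) : ℝ) * ((B j : W) : ℝ) := by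
      have := B.sum_repr (v p)
      calc ((v p : W) : ℝ) = (((∑ j, B.repr (v p) j • B j : C) : W) : ℝ) := by rw [this]
        _ = ∑ j, ((B.repr (v p) j : ℚ) : ℝ) * ((B j : W) : ℝ) := by
            push_cast [Submodule.coe_sum]
            simp [Rat.smul_def]
    rw [← h1]
    push_cast [Submodule.coe_smul]
    rw [h2]
    simp [hudef, Rat.smul_def]
  · intro c d hcd
    have hsum : (c • u + (∑ j, d j • (B j : W)) : W) = 0 := by
      apply Subtype.ext
      push_cast [Submodule.coe_smul, Submodule.coe_sum]
      simpa [hudef, Rat.smul_def] using hcd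
    have hmem1 : c • u ∈ (ℚ ∙ u) := Submodule.smul_mem _ _ (Submodule.mem_span_singleton_self u)
    have hmem2 : (∑ j, d j • (B j : W)) ∈ C := by
      apply Submodule.sum_mem
      intro j _
      exact Submodule.smul_mem _ _ (B j).2
    have heq : c • u = -(∑ j, d j • (B j : W)) := by linear_combination (norm := abel) hsum
    have hbot : c • u ∈ (ℚ ∙ u) ⊓ C := by
      refine ⟨hmem1, ?_⟩
      rw [heq]; exact Submodule.neg_mem _ hmem2
    rw [hC.inf_eq_bot] at hbot
    have hc : c = 0 := by
      rcases smul_eq_zero.mp hbot with h | h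
      · exact h
      · exact absurd h hu
    refine ⟨hc, ?_⟩
    have hz : (∑ j, d j • (B j : W)) = 0 := by
      rw [hc, zero_smul, zero_add] at hsum; exact hsum
    have hzC : (∑ j, d j • B j : C) = 0 := by
      have : ((∑ j, d j • B j : C) : W) = ((0 : C) : W) := by
        push_cast [Submodule.coe_sum]
        simpa using hz
      exact Subtype.ext this
    exact Fintype.linearIndependent_iff.mp B.linearIndependent d hzC

end Decomp

section RatLP

/-- Rationalization of a feasible LP solution: if a rational linear system (including the
all-ones row) has a nonnegative real solution with real objective value at least `M`,
then it has a nonnegative rational solution with objective value at least `M`. -/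
lemma rat_lp {ι κ : Type*} [Fintype ι] [Fintype κ] [DecidableEq ι]
    (A : κ → ι → ℚ) (b : κ → ℚ) (k₀ : κ) (hk₀ : ∀ p, A k₀ p = 1)
    (L : ι → ℝ) (M : ℝ) :
    ∀ (N : ℕ) (s : Finset ι) (x : ι → ℝ),
      s.card ≤ N →
      (∀ p, 0 ≤ x p) → (∀ p ∉ s, x p = 0) →
      (∀ k, ∑ p, (A k p : ℝ) * x p = (b k : ℝ)) →
      M ≤ ∑ p, L p * x p →
      ∃ q : ι → ℚ, (∀ p, 0 ≤ q p) ∧ (∀ k, ∑ p, A k p * q p = b k) ∧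
        M ≤ ∑ p, L p * (q p : ℝ) := by
  classical
  intro N
  induction N with
  | zero =>
    intro s x hcard _ hsupp hA hobj
    have hs : s = ∅ := Finset.card_eq_zero.mp (Nat.le_zero.mp hcard)
    have hx0 : ∀ p, x p = 0 := fun p => hsupp p (by simp [hs])
    refine ⟨0, fun p => le_refl 0, fun k => ?_, ?_⟩
    · have h0 := hA k
      simp only [hx0, mul_zero, Finset.sum_const_zero] at h0
      have hb : b k = 0 := by exact_mod_cast h0.symm
      simp [hb]
    · simpa [hx0] using hobj
  | succ N IH =>
    intro s x hcard hnn hsupp hA hobj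
    by_cases hzero : ∃ p ∈ s, x p = 0
    · obtain ⟨p0, hp0s, hp0⟩ := hzero
      refine IH (s.erase p0) x ?_ hnn ?_ hA hobj
      · rw [Finset.card_erase_of_mem hp0s]; omega
      · intro p hp
        by_cases hpp : p = p0
        · rw [hpp]; exact hp0
        · exact hsupp p (fun hps => hp (Finset.mem_erase.mpr ⟨hpp, hps⟩))
    · push_neg at hzero
      have hpos : ∀ p ∈ s, 0 < x p := fun p hp => (hnn p).lt_of_ne (Ne.symm (hzero p hp))
      obtain ⟨m, e, q0, q, hxeq, hind⟩ := rat_decomp x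
      have hpush : ∀ (c : ι → ℚ) (rr : ℚ), (∑ p, (c p : ℝ) * x p = (rr : ℝ)) →
          (∑ p, c p * q0 p = rr) ∧ ∀ j, ∑ p, c p * q p j = 0 := by
        intro c rr h
        have h2 : ∑ p, (c p : ℝ) * x p
            = (∑ p, (c p : ℝ) * (q0 p : ℝ)) + ∑ j, (∑ p, (c p : ℝ) * (q p j : ℝ)) * e j := by
          rw [← swap_helper]
          exact Finset.sum_congr rfl fun p _ => by rw [hxeq p]
        have h3 : ((∑ p, c p * q0 p - rr : ℚ) : ℝ)
            + ∑ j, ((∑ p, c p * q p j : ℚ) : ℝ) * e j = 0 := by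
          push_cast
          rw [h2] at h
          linarith [h]
        obtain ⟨h4, h5⟩ := hind _ _ h3
        exact ⟨sub_eq_zero.mp h4, h5⟩
      have hsupp0 : ∀ p ∉ s, q0 p = 0 ∧ ∀ j, q p j = 0 := by
        intro p hp
        have h : (q0 p : ℝ) + ∑ j, (q p j : ℝ) * e j = 0 := by rw [← hxeq p]; exact hsupp p hp
        exact hind _ _ h
      have hAq0 : ∀ k, ∑ p, A k p * q0 p = b k := fun k => (hpush (A k) (b k) (hA k)).1
      have hAq : ∀ k j, ∑ p, A k p * q p j = 0 := fun k => (hpush (A k) (b k) (hA k)).2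
      have hobjdec : ∑ p, L p * x p
          = (∑ p, L p * (q0 p : ℝ)) + ∑ j, (∑ p, L p * (q p j : ℝ)) * e j := by
        rw [← swap_helper]
        exact Finset.sum_congr rfl fun p _ => by rw [hxeq p]
      by_cases hall : ∀ j, ∑ p, L p * ((q p j : ℚ) : ℝ) = 0
      · -- perturbation case
        have hobjq0 : M ≤ ∑ p, L p * (q0 p : ℝ) := by
          rw [hobjdec] at hobj
          simp only [hall, zero_mul, Finset.sum_const_zero, add_zero] at hobj
          exact hobj
        rcases Finset.eq_empty_or_nonempty s with hs | hs
        · refine ⟨q0, fun p => ?_, hAq0, hobjq0⟩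
          rw [(hsupp0 p (by simp [hs])).1]
        · obtain ⟨pδ, hpδs, hpδ⟩ := Finset.exists_min_image s x hs
          set δ : ℝ := x pδ with hδdef
          have hδpos : 0 < δ := hpos pδ hpδs
          set Γ : ℝ := ∑ p, ∑ j, |(q p j : ℝ)| with hΓdef
          have hΓnn : 0 ≤ Γ := Finset.sum_nonneg fun p _ =>
            Finset.sum_nonneg fun j _ => abs_nonneg _
          set δ' : ℝ := δ / (1 + Γ) with hδ'def
          have hδ'pos : 0 < δ' := div_pos hδpos (by linarith)
          choose t ht using fun j : Fin m => exists_rat_near (e j) hδ'pos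
          have hkey : ∀ p, ((q0 p + ∑ j, q p j * t j : ℚ) : ℝ)
              = x p + ∑ j, ((t j : ℝ) - e j) * (q p j : ℝ) := by
            intro p
            rw [hxeq p]
            push_cast
            calc ((q0 p : ℝ) + ∑ j, (q p j : ℝ) * (t j : ℝ))
                = (q0 p : ℝ) + ∑ j, ((q p j : ℝ) * e j + ((t j : ℝ) - e j) * (q p j : ℝ)) := by
                  congr 1
                  exact Finset.sum_congr rfl fun j _ => by ring
              _ = ((q0 p : ℝ) + ∑ j, (q p j : ℝ) * e j)
                    + ∑ j, ((t j : ℝ) - e j) * (q p j : ℝ) := by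
                  rw [Finset.sum_add_distrib]; ring
          refine ⟨fun p => q0 p + ∑ j, q p j * t j, ?_, ?_, ?_⟩
          · intro p
            by_cases hps : p ∈ s
            · have hb1 : |∑ j, ((t j : ℝ) - e j) * (q p j : ℝ)| ≤ δ' * Γ := by
                calc |∑ j, ((t j : ℝ) - e j) * (q p j : ℝ)|
                    ≤ ∑ j, |((t j : ℝ) - e j) * (q p j : ℝ)| := Finset.abs_sum_le_sum_abs _ _
                  _ ≤ ∑ j, δ' * |(q p j : ℝ)| := by
                      apply Finset.sum_le_sum
                      intro j _
                      rw [abs_mul]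
                      apply mul_le_mul_of_nonneg_right _ (abs_nonneg _)
                      rw [abs_sub_comm]
                      exact (ht j).le
                  _ = δ' * ∑ j, |(q p j : ℝ)| := by rw [Finset.mul_sum]
                  _ ≤ δ' * Γ := by
                      apply mul_le_mul_of_nonneg_left _ hδ'pos.le
                      exact Finset.single_le_sum (f := fun p => ∑ j, |(q p j : ℝ)|)
                        (fun p _ => Finset.sum_nonneg fun j _ => abs_nonneg _) (mem_univ p)
              have hb2 : δ' * Γ < δ := by
                rw [hδ'def, div_mul_eq_mul_div, div_lt_iff₀ (by linarith : (0:ℝ) < 1 + Γ)]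
                nlinarith
              have hge : 0 ≤ ((q0 p + ∑ j, q p j * t j : ℚ) : ℝ) := by
                rw [hkey p]
                have habs := abs_le.mp hb1
                have hxp : δ ≤ x p := hpδ p hps
                linarith [habs.1]
              exact_mod_cast hge
            · obtain ⟨h1, h2⟩ := hsupp0 p hps
              simp [h1, h2]
          · intro k
            show ∑ p, A k p * (q0 p + ∑ j, q p j * t j) = b k
            rw [swap_helper]
            simp [hAq0 k, hAq k]
          · show M ≤ ∑ p, L p * ((fun p => q0 p + ∑ j, q p j * t j) p : ℝ)
            have hc : ∀ p, ((q0 p + ∑ j, q p j * t j : ℚ) : ℝ)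
                = (q0 p : ℝ) + ∑ j, (q p j : ℝ) * (t j : ℝ) := by intro p; push_cast; ring_nf
            calc M ≤ ∑ p, L p * (q0 p : ℝ) := hobjq0
              _ = (∑ p, L p * (q0 p : ℝ)) + ∑ j, (∑ p, L p * (q p j : ℝ)) * (t j : ℝ) := by
                  simp [hall]
              _ = ∑ p, L p * ((q0 p : ℝ) + ∑ j, (q p j : ℝ) * (t j : ℝ)) :=
                  (swap_helper _ _ _ _).symm
              _ = ∑ p, L p * ((q0 p + ∑ j, q p j * t j : ℚ) : ℝ) :=
                  Finset.sum_congr rfl fun p _ => by rw [hc p]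
      · -- line-walk case
        push_neg at hall
        obtain ⟨j₀, hj₀⟩ := hall
        set o : ℝ := ∑ p, L p * (q p j₀ : ℝ) with ho
        set d : ι → ℚ := if 0 < o then (fun p => q p j₀) else (fun p => -q p j₀) with hd
        have hdsupp : ∀ p ∉ s, d p = 0 := by
          intro p hp
          have h2 := (hsupp0 p hp).2 j₀
          rw [hd]
          split_ifs <;> simp [h2]
        have hAd : ∀ k, ∑ p, A k p * d p = 0 := by
          intro k
          rw [hd]
          split_ifs
          · exact hAq k j₀
          · simp only [mul_neg, Finset.sum_neg_distrib, neg_eq_zero]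
            exact hAq k j₀
        have hod : 0 < ∑ p, L p * (d p : ℝ) := by
          rw [hd]
          split_ifs with hoo
          · exact hoo
          · have hlt : o < 0 := lt_of_le_of_ne (not_lt.mp hoo) hj₀
            have heq : ∑ p, L p * ((-q p j₀ : ℚ) : ℝ) = -o := by
              rw [ho, ← Finset.sum_neg_distrib]
              apply Finset.sum_congr rfl
              intro p _
              push_cast
              ring
            rw [heq]
            linarith
        have hneg : ∃ pn, d pn < 0 := by
          by_contra hcon
          push_neg at hcon
          have hsum0 : ∑ p, d p = 0 := by
            have h := hAd k₀
            simpa [hk₀] using h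
          have hall0 := (Finset.sum_eq_zero_iff_of_nonneg (fun p _ => hcon p)).mp hsum0
          have hz : ∑ p, L p * (d p : ℝ) = 0 :=
            Finset.sum_eq_zero fun p _ => by rw [hall0 p (mem_univ p)]; simp
          linarith
        obtain ⟨pneg, hpneg⟩ := hneg
        have hnegne : (Finset.univ.filter (fun p => d p < 0)).Nonempty :=
          ⟨pneg, by simp [hpneg]⟩
        obtain ⟨ph, hph, hphmin⟩ :=
          Finset.exists_min_image _ (fun p => x p / (-(d p : ℝ))) hnegne
        have hdph : (d ph : ℝ) < 0 := by
          have := (Finset.mem_filter.mp hph).2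
          exact_mod_cast this
        set ts : ℝ := x ph / (-(d ph : ℝ)) with hts
        have htsnn : 0 ≤ ts := div_nonneg (hnn ph) (by linarith)
        set x' : ι → ℝ := fun p => x p + ts * (d p : ℝ) with hx'
        have hphs : ph ∈ s := by
          by_contra hc
          rw [hdsupp ph hc] at hdph
          norm_num at hdph
        have hx'ph : x' ph = 0 := by
          have hne : -(d ph : ℝ) ≠ 0 := by linarith
          simp only [hx', hts]
          field_simp
          rw [div_self (by linarith : (d ph : ℝ) ≠ 0)]; ring
        refine IH (s.erase ph) x' ?_ ?_ ?_ ?_ ?_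
        · rw [Finset.card_erase_of_mem hphs]; omega
        · intro p
          rcases lt_or_ge (d p) 0 with hdp | hdp
          · have hpmem : p ∈ Finset.univ.filter (fun p => d p < 0) := by simp [hdp]
            have hmin := hphmin p hpmem
            have hdpr : (0:ℝ) < -(d p : ℝ) := by
              have : (d p : ℝ) < 0 := by exact_mod_cast hdp
              linarith
            have h2 : ts * (-(d p : ℝ)) ≤ x p := (le_div_iff₀ hdpr).mp hmin
            simp only [hx']
            nlinarith
          · have hdr : (0:ℝ) ≤ (d p : ℝ) := by exact_mod_cast hdp
            have := mul_nonneg htsnn hdr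
            simp only [hx']
            linarith [hnn p]
        · intro p hp
          by_cases hpp : p = ph
          · rw [hpp]; exact hx'ph
          · have hps : p ∉ s := fun hc => hp (Finset.mem_erase.mpr ⟨hpp, hc⟩)
            simp only [hx', hsupp p hps, hdsupp p hps]
            simp
        · intro k
          have hAdr : ∑ p, (A k p : ℝ) * (d p : ℝ) = 0 := by
            have h := hAd k
            have h2 : ((∑ p, A k p * d p : ℚ) : ℝ) = 0 := by rw [h]; norm_num
            push_cast at h2
            exact h2
          calc ∑ p, (A k p : ℝ) * x' p
              = ∑ p, ((A k p : ℝ) * x p + ts * ((A k p : ℝ) * (d p : ℝ))) :=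
                Finset.sum_congr rfl fun p _ => by simp only [hx']; ring
            _ = (∑ p, (A k p : ℝ) * x p) + ts * ∑ p, (A k p : ℝ) * (d p : ℝ) := by
                rw [Finset.sum_add_distrib, Finset.mul_sum]
            _ = (b k : ℝ) := by rw [hA k, hAdr]; ring
        · calc M ≤ ∑ p, L p * x p := hobj
            _ ≤ (∑ p, L p * x p) + ts * ∑ p, L p * (d p : ℝ) := by nlinarith
            _ = ∑ p, (L p * x p + ts * (L p * (d p : ℝ))) := by
                rw [Finset.sum_add_distrib, Finset.mul_sum]
            _ = ∑ p, L p * x' p := Finset.sum_congr rfl fun p _ => by simp only [hx']; ring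

end RatLP

lemma sep_step {n : ℕ} (f : Finset (Fin n) → ℝ) (M : ℝ) (hM : 0 < M)
    (hclosest : ∀ g : Finset (Fin n) → ℝ, IsLinear g → ∃ S : Finset (Fin n), M ≤ |f S - g S|)
    (hno : ∀ x : Finset (Fin n) × Bool → ℝ, (∀ p, 0 ≤ x p) →
      ((∑ p, x p = 1) ∧ (∑ p, (if p.2 then (1:ℝ) else -1) * x p = 0) ∧
       (∀ i, ∑ p, ((if p.2 then (1:ℝ) else -1) * (if i ∈ p.1 then 1 else 0)) * x p = 0)) →
      ∑ p, ((if p.2 then (1:ℝ) else -1) * f p.1) * x p < M) : False := by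
  classical
  set ι := Finset (Fin n) × Bool with hι
  set E := (Option (Option (Fin n)) → ℝ) with hE
  set sgn : Bool → ℝ := fun b => if b then 1 else -1 with hsgn
  set P : ι → E := fun p k =>
    match k with
    | none => sgn p.2 * f p.1
    | some none => sgn p.2
    | some (some i) => sgn p.2 * (if i ∈ p.1 then 1 else 0) with hP
  have hP0 : ∀ p, P p none = sgn p.2 * f p.1 := fun p => rfl
  have hP1 : ∀ p, P p (some none) = sgn p.2 := fun p => rfl
  have hP2 : ∀ p i, P p (some (some i)) = sgn p.2 * (if i ∈ p.1 then 1 else 0) := fun p i => rfl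
  set z : E := fun k => match k with | none => M | some _ => 0 with hz
  have hz0 : z none = M := rfl
  have hz1 : z (some none) = 0 := rfl
  have hz2 : ∀ i, z (some (some i)) = 0 := fun i => rfl
  set T : (ι → ℝ) → E := fun w => ∑ p, w p • P p with hT
  have hTapp : ∀ (w : ι → ℝ) (k), T w k = ∑ p, w p * P p k := by
    intro w k
    rw [hT]
    simp only
    rw [Finset.sum_apply]
    rfl
  set C : Set E := T '' (stdSimplex ℝ ι) with hC
  have hTcont : Continuous T :=
    continuous_finset_sum _ fun p _ => (continuous_apply p).smul continuous_const
  have hCconv : Convex ℝ C := by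
    rintro y1 ⟨w1, hw1, rfl⟩ y2 ⟨w2, hw2, rfl⟩ a b ha hb hab
    refine ⟨a • w1 + b • w2, convex_stdSimplex ℝ ι hw1 hw2 ha hb hab, ?_⟩
    rw [hT]
    simp only
    rw [Finset.smul_sum, Finset.smul_sum, ← Finset.sum_add_distrib]
    apply Finset.sum_congr rfl
    intro p _
    simp only [Pi.add_apply, Pi.smul_apply, smul_eq_mul]
    rw [add_smul, smul_smul, smul_smul]
  have hCclosed : IsClosed C := ((isCompact_stdSimplex ℝ ι).image hTcont).isClosed
  have hzC : z ∉ C := by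
    rintro ⟨w, hw, hTw⟩
    have hnn : ∀ p, 0 ≤ w p := hw.1
    have h1 : ∑ p, w p = 1 := hw.2
    have hbal : ∑ p, (if p.2 then (1:ℝ) else -1) * w p = 0 := by
      have hh := congrFun hTw (some none)
      rw [hTapp, hz1] at hh
      exact (Finset.sum_congr rfl fun p _ => by simp only [hP1, hsgn]; ring).trans hh
    have hmom : ∀ i, ∑ p, ((if p.2 then (1:ℝ) else -1) * (if i ∈ p.1 then 1 else 0)) * w p = 0 := by
      intro i
      have hh := congrFun hTw (some (some i))
      rw [hTapp, hz2 i] at hh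
      exact (Finset.sum_congr rfl fun p _ => by simp only [hP2, hsgn]; ring).trans hh
    have hobj : ∑ p, ((if p.2 then (1:ℝ) else -1) * f p.1) * w p = M := by
      have hh := congrFun hTw none
      rw [hTapp, hz0] at hh
      exact (Finset.sum_congr rfl fun p _ => by simp only [hP0, hsgn]; ring).trans hh
    have := hno w hnn ⟨h1, hbal, hmom⟩
    rw [hobj] at this
    exact lt_irrefl M this
  obtain ⟨ℓ, u, hCu, huz⟩ := geometric_hahn_banach_closed_point hCconv hCclosed hzC
  set wv : Option (Option (Fin n)) → ℝ := fun k => ℓ (fun j => if k = j then 1 else 0) with hwv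
  have hℓ : ∀ y : E, ℓ y = ∑ k, y k * wv k := by
    intro y
    conv_lhs => rw [pi_eq_sum_univ y]
    rw [map_sum]
    apply Finset.sum_congr rfl
    intro k _
    rw [map_smul, smul_eq_mul, hwv]
  have hPmem : ∀ p, P p ∈ C := by
    intro p
    refine ⟨fun p' => if p' = p then 1 else 0, ⟨?_, ?_⟩, ?_⟩
    · intro p'
      dsimp only
      split_ifs <;> norm_num
    · rw [Finset.sum_eq_single p (fun b _ hb => if_neg hb) (fun h => absurd (Finset.mem_univ p) h)]; exact if_pos rfl
    · rw [hT]
      dsimp only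
      have hterm : ∀ p' : ι, (if p' = p then (1:ℝ) else 0) • P p'
          = if p' = p then P p' else 0 := by
        intro p'
        split_ifs <;> simp
      rw [Finset.sum_congr rfl fun p' _ => hterm p']
      rw [Finset.sum_eq_single p (fun b _ hb => if_neg hb) (fun h => absurd (Finset.mem_univ p) h)]; exact if_pos rfl
  have hsep : ∀ p, ℓ (P p) < u := fun p => hCu _ (hPmem p)
  set α := wv none with hα
  set r : Finset (Fin n) → ℝ :=
    fun S => wv (some none) + (∑ i ∈ S, wv (some (some i))) + f S * α with hr
  have hrP : ∀ S b, ℓ (P (S, b)) = sgn b * r S := by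
    intro S b
    rw [hℓ, Fintype.sum_option, Fintype.sum_option, hP0, hP1]
    have hpt : ∀ i : Fin n, P (S, b) (some (some i)) * wv (some (some i))
        = if i ∈ S then sgn b * wv (some (some i)) else 0 := by
      intro i
      rw [hP2]
      by_cases hiS : i ∈ S
      · simp [hiS]
      · simp [hiS]
    rw [Finset.sum_congr rfl (fun i _ => hpt i), Finset.sum_ite_mem, Finset.univ_inter,
      ← Finset.mul_sum, hr]
    simp only
    ring
  have hru : ∀ S, |r S| < u := by
    intro S
    have h1 := hsep (S, true)
    have h2 := hsep (S, false)
    rw [hrP] at h1 h2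
    rw [show sgn true = 1 from rfl, one_mul] at h1
    rw [show sgn false = -1 from rfl, neg_one_mul] at h2
    exact abs_lt.mpr ⟨by linarith, h1⟩
  have hu0 : 0 < u := lt_of_le_of_lt (abs_nonneg (r ∅)) (hru ∅)
  have huM : u < M * α := by
    have hh := huz
    rw [hℓ z, Fintype.sum_option, hz0] at hh
    have hrest : ∑ i : Option (Fin n), z (some i) * wv (some i) = 0 := by
      apply Finset.sum_eq_zero
      intro i _
      match i with
      | none => rw [hz1]; ring
      | some i => rw [hz2 i]; ring
    rw [hrest] at hh
    simpa [hα] using hh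
  have hαpos : 0 < α := by nlinarith
  set g : Finset (Fin n) → ℝ :=
    fun S => -((wv (some none) + ∑ i ∈ S, wv (some (some i))) / α) with hg
  have hglin : IsLinear g := by
    refine ⟨-(wv (some none) / α), fun i => -(wv (some (some i)) / α), fun S => ?_⟩
    rw [hg]
    simp only
    have hsd : ∑ i ∈ S, -(wv (some (some i)) / α) = -((∑ i ∈ S, wv (some (some i))) / α) := by
      rw [Finset.sum_neg_distrib, Finset.sum_div]
    rw [hsd]
    ring
  obtain ⟨S, hS⟩ := hclosest g hglin
  have hfg : f S - g S = r S / α := by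
    rw [hg, hr]
    simp only
    field_simp
    ring
  have : |f S - g S| < M := by
    rw [hfg, abs_div, abs_of_pos hαpos, div_lt_iff₀ hαpos]
    calc |r S| < u := hru S
      _ < M * α := huM
  linarith

section Certificate

def modRow (n : ℕ) : Option (Option (Fin n)) → Finset (Fin n) × Bool → ℚ := fun k p =>
  match k with
  | none => 1
  | some none => if p.2 then 1 else -1
  | some (some i) => (if p.2 then 1 else -1) * (if i ∈ p.1 then 1 else 0)

def modRhs (n : ℕ) : Option (Option (Fin n)) → ℚ := fun k =>
  match k with
  | none => 1
  | some _ => 0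

lemma modRow_none (n : ℕ) (x : Finset (Fin n) × Bool → ℝ) :
    ∑ p, ((modRow n none p : ℚ) : ℝ) * x p = ∑ p, x p :=
  Finset.sum_congr rfl fun p _ => by norm_num [modRow]

lemma modRow_bal (n : ℕ) (x : Finset (Fin n) × Bool → ℝ) :
    ∑ p, ((modRow n (some none) p : ℚ) : ℝ) * x p
      = ∑ p, (if p.2 then (1:ℝ) else -1) * x p :=
  Finset.sum_congr rfl fun p _ => by
    congr 1
    simp only [modRow]
    split_ifs <;> norm_num

lemma modRow_mom (n : ℕ) (i : Fin n) (x : Finset (Fin n) × Bool → ℝ) :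
    ∑ p, ((modRow n (some (some i)) p : ℚ) : ℝ) * x p
      = ∑ p, ((if p.2 then (1:ℝ) else -1) * (if i ∈ p.1 then 1 else 0)) * x p :=
  Finset.sum_congr rfl fun p _ => by
    congr 1
    simp only [modRow]
    push_cast
    split_ifs <;> norm_num

lemma exists_real_certificate {n : ℕ} (f : Finset (Fin n) → ℝ) (M : ℝ)
    (hclosest : ∀ g : Finset (Fin n) → ℝ, IsLinear g → ∃ S : Finset (Fin n), M ≤ |f S - g S|) :
    ∃ x : Finset (Fin n) × Bool → ℝ, (∀ p, 0 ≤ x p) ∧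
      (∀ k, ∑ p, (modRow n k p : ℝ) * x p = (modRhs n k : ℝ)) ∧
      M ≤ ∑ p, ((if p.2 then (1:ℝ) else -1) * f p.1) * x p := by
  classical
  have hclean : ∃ x : Finset (Fin n) × Bool → ℝ, (∀ p, 0 ≤ x p) ∧
      ((∑ p, x p = 1) ∧ (∑ p, (if p.2 then (1:ℝ) else -1) * x p = 0) ∧
       (∀ i, ∑ p, ((if p.2 then (1:ℝ) else -1) * (if i ∈ p.1 then 1 else 0)) * x p = 0)) ∧
      M ≤ ∑ p, ((if p.2 then (1:ℝ) else -1) * f p.1) * x p := by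
    by_cases hM : 0 < M
    · by_contra hno
      push_neg at hno
      exact sep_step f M hM hclosest (fun x hx h => hno x hx h)
    · refine ⟨fun p => if p.1 = ∅ then 1/2 else 0,
        fun p => by dsimp only; split_ifs <;> norm_num, ⟨?_, ?_, ?_⟩, ?_⟩
      · rw [Fintype.sum_prod_type]
        simp [Fintype.sum_bool, Finset.sum_ite_eq']
      · rw [Fintype.sum_prod_type]
        apply Finset.sum_eq_zero
        intro S _
        rw [Fintype.sum_bool]
        norm_num
        split_ifs <;> norm_num
      · intro i
        rw [Fintype.sum_prod_type]
        apply Finset.sum_eq_zero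
        intro S _
        rw [Fintype.sum_bool]
        norm_num
        split_ifs <;> simp_all
      · have hz : ∑ p : Finset (Fin n) × Bool,
            ((if p.2 then (1:ℝ) else -1) * f p.1) * (if p.1 = ∅ then (1:ℝ)/2 else 0) = 0 := by
          rw [Fintype.sum_prod_type]
          apply Finset.sum_eq_zero
          intro S _
          rw [Fintype.sum_bool]
          norm_num
          split_ifs <;> norm_num
        rw [hz]
        exact not_lt.mp hM
  obtain ⟨x, hnn, ⟨h1, h2, h3⟩, hobj⟩ := hclean
  refine ⟨x, hnn, ?_, hobj⟩
  intro k
  match k with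
  | none =>
    rw [modRow_none n x, h1]
    norm_num [modRhs]
  | some none =>
    rw [modRow_bal n x, h2]
    norm_num [modRhs]
  | some (some i) =>
    rw [modRow_mom n i x, h3 i]
    norm_num [modRhs]

end Certificate

theorem canonical_collections {n : ℕ} (f : Finset (Fin n) → ℝ) (ε M : ℝ)
    (hf : IsWeaklyModular f ε)
    (hM : ∀ S : Finset (Fin n), |f S| ≤ M) (hMex : ∃ S : Finset (Fin n), |f S| = M)
    (hclosest : ∀ g : Finset (Fin n) → ℝ, IsLinear g → ∃ S : Finset (Fin n), M ≤ |f S - g S|) :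
    ∃ k' : ℕ, 0 < k' ∧ ∀ c : ℕ, 0 < c →
      ∃ G : Multiset (Finset (Fin n)),
        Multiset.card G = 2 * (c * k') ∧
        (∀ i : Fin n, Multiset.card (G.filter (fun S => i ∈ S)) = c * k') ∧
        (G.map (fun S => (M - f S) + (M + f (Finset.univ \ S)))).sum
          ≤ 2 * (c * k' : ℝ) * ε := by
  classical
  obtain ⟨x, hxnn, hxrow, hxobj⟩ := exists_real_certificate f M hclosest
  obtain ⟨q, hqnn, hqrow, hqobj⟩ := rat_lp (modRow n) (modRhs n) none (fun p => rfl)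
    (fun p => (if p.2 then (1:ℝ) else -1) * f p.1) M
    (Finset.univ.card) Finset.univ x (le_refl _) hxnn
    (fun p hp => absurd (Finset.mem_univ p) hp) hxrow hxobj
  have hq1 : ∑ p, q p = 1 := by
    have h := hqrow none
    simpa [modRow, modRhs] using h
  have hq2 : ∑ p, (if p.2 then (1:ℚ) else -1) * q p = 0 := hqrow (some none)
  have hq3 : ∀ i, ∑ p, ((if p.2 then (1:ℚ) else -1) * (if i ∈ p.1 then 1 else 0)) * q p = 0 :=
    fun i => hqrow (some (some i))
  set k' : ℕ := ∏ p : Finset (Fin n) × Bool, (q p).den with hk'def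
  have hk'pos : 0 < k' := Finset.prod_pos fun p _ => (q p).pos
  refine ⟨k', hk'pos, ?_⟩
  intro c hc
  set m : Finset (Fin n) × Bool → ℕ :=
    fun p => 2 * c * (k' / (q p).den) * (q p).num.toNat with hmdef
  have hmq : ∀ p, (m p : ℚ) = 2 * ((c : ℚ) * (k' : ℚ)) * q p := by
    intro p
    have hdvd : (q p).den ∣ k' := Finset.dvd_prod_of_mem _ (Finset.mem_univ p)
    have hdenne : ((q p).den : ℚ) ≠ 0 := Nat.cast_ne_zero.mpr (q p).den_nz
    have hnum : (((q p).num.toNat : ℕ) : ℚ) = ((q p).num : ℚ) := by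
      have h := Int.toNat_of_nonneg (Rat.num_nonneg.mpr (hqnn p))
      exact_mod_cast congrArg (fun z : ℤ => (z : ℚ)) h
    have hstep : ((2 * c * (k' / (q p).den) * (q p).num.toNat : ℕ) : ℚ)
        = 2 * (c : ℚ) * (((k' / (q p).den : ℕ)) : ℚ) * (((q p).num.toNat : ℕ) : ℚ) := by
      push_cast
      ring
    show ((2 * c * (k' / (q p).den) * (q p).num.toNat : ℕ) : ℚ) = _
    rw [hstep, Nat.cast_div hdvd hdenne, hnum]
    have hfin : (2 : ℚ) * (c:ℚ) * ((k':ℚ)/((q p).den:ℚ)) * ((q p).num:ℚ)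
        = 2*((c:ℚ)*(k':ℚ)) * (((q p).num:ℚ)/((q p).den:ℚ)) := by
      ring
    rw [hfin, Rat.num_div_den]
  set memb : Finset (Fin n) × Bool → Finset (Fin n) :=
    fun p => if p.2 then p.1 else Finset.univ \ p.1 with hmembdef
  refine ⟨∑ p, Multiset.replicate (m p) (memb p), ?_, ?_, ?_⟩
  · rw [msum_card]
    simp only [Multiset.card_replicate]
    have hQ : ((∑ p, m p : ℕ) : ℚ) = ((2 * (c * k') : ℕ) : ℚ) := by
      push_cast
      rw [Finset.sum_congr rfl fun p _ => hmq p, ← Finset.mul_sum, hq1, mul_one]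
    exact_mod_cast hQ
  · intro i
    rw [msum_filter]
    rw [Finset.sum_congr rfl fun p _ => mfilter_replicate (m p) (memb p) (fun S => i ∈ S)]
    rw [msum_card]
    rw [Finset.sum_congr rfl fun p _ => (apply_ite Multiset.card (i ∈ memb p)
      (Multiset.replicate (m p) (memb p)) 0)]
    simp only [Multiset.card_replicate, Multiset.card_zero]
    have hind : ∀ p : Finset (Fin n) × Bool, (if i ∈ memb p then (1:ℚ) else 0)
        = (1 - (if p.2 then (1:ℚ) else -1))/2
          + (if p.2 then (1:ℚ) else -1) * (if i ∈ p.1 then 1 else 0) := by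
      rintro ⟨S, b⟩
      cases b
      · by_cases hiS : i ∈ S
        · simp [hmembdef, Finset.mem_sdiff, hiS]
        · simp [hmembdef, Finset.mem_sdiff, hiS]
      · by_cases hiS : i ∈ S
        · simp [hmembdef, hiS]
        · simp [hmembdef, hiS]
    have hhalf : ∑ p, q p * (if i ∈ memb p then (1:ℚ) else 0) = 1/2 := by
      rw [Finset.sum_congr rfl fun p _ => by rw [hind p]]
      have hexp : ∑ p, q p * ((1 - (if p.2 then (1:ℚ) else -1))/2
            + (if p.2 then (1:ℚ) else -1) * (if i ∈ p.1 then 1 else 0))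
          = (∑ p, q p)/2 - (∑ p, (if p.2 then (1:ℚ) else -1) * q p)/2
            + ∑ p, ((if p.2 then (1:ℚ) else -1) * (if i ∈ p.1 then 1 else 0)) * q p := by
        rw [Finset.sum_div, Finset.sum_div, ← Finset.sum_sub_distrib, ← Finset.sum_add_distrib]
        exact Finset.sum_congr rfl fun p _ => by ring
      rw [hexp, hq1, hq2, hq3 i]
      norm_num
    have hQ : ((∑ p, if i ∈ memb p then m p else 0 : ℕ) : ℚ) = ((c * k' : ℕ) : ℚ) := by
      push_cast
      have hterm : ∀ p : Finset (Fin n) × Bool, (if i ∈ memb p then ((m p : ℕ) : ℚ) else 0)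
          = 2 * ((c : ℚ) * (k' : ℚ)) * (q p * (if i ∈ memb p then (1:ℚ) else 0)) := by
        intro p
        split_ifs
        · rw [hmq p]; ring
        · ring
      rw [Finset.sum_congr rfl fun p _ => hterm p, ← Finset.mul_sum, hhalf]
      ring
    exact_mod_cast hQ
  · rw [msum_map]
    rw [Finset.sum_congr rfl fun p _ => Multiset.map_replicate _ (m p) (memb p)]
    rw [msum_sum]
    rw [Finset.sum_congr rfl fun p _ => Multiset.sum_replicate (m p) _]
    simp only [nsmul_eq_mul]
    set w : ℝ := f Finset.univ + f ∅ with hwdef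
    have hbound : ∀ p : Finset (Fin n) × Bool,
        ((M - f (memb p)) + (M + f (Finset.univ \ memb p)))
          ≤ 2*M + ε - (if p.2 then (1:ℝ) else -1) * (2 * f p.1 - w) := by
      rintro ⟨S, b⟩
      have hmod := hf S (Finset.univ \ S) Finset.disjoint_sdiff
      rw [Finset.union_sdiff_of_subset (Finset.subset_univ S),
        Finset.inter_sdiff_self] at hmod
      have habs := abs_le.mp hmod
      cases b
      · have hmb : memb (S, false) = Finset.univ \ S := rfl
        rw [hmb, Finset.sdiff_sdiff_self_left, Finset.univ_inter]
        norm_num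
        linarith [habs.1, habs.2]
      · have hmb : memb (S, true) = S := rfl
        rw [hmb]
        norm_num
        linarith [habs.1, habs.2]
    set K : ℝ := 2 * ((c : ℝ) * (k' : ℝ)) with hKdef
    have hKnn : 0 ≤ K := by positivity
    have hmr : ∀ p, (m p : ℝ) = K * (q p : ℝ) := by
      intro p
      have h2 : ((m p : ℚ) : ℝ) = ((2 * ((c : ℚ) * (k' : ℚ)) * q p : ℚ) : ℝ) := by rw [hmq p]
      push_cast at h2
      rw [hKdef]
      linarith [h2]
    have hr1 : ∑ p, (m p : ℝ) = K := by
      have hcast : ((∑ p, q p : ℚ) : ℝ) = 1 := by rw [hq1]; norm_num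
      push_cast at hcast
      rw [Finset.sum_congr rfl fun p _ => hmr p, ← Finset.mul_sum, hcast, mul_one]
    have hsgncast : ∀ p : Finset (Fin n) × Bool,
        (((if p.2 then (1:ℚ) else -1) : ℚ) : ℝ) * (q p : ℝ)
          = (if p.2 then (1:ℝ) else -1) * (q p : ℝ) := by
      intro p
      congr 1
      split_ifs <;> norm_num
    have hr2 : ∑ p, (if p.2 then (1:ℝ) else -1) * (m p : ℝ) = 0 := by
      have hcast : ((∑ p, (if p.2 then (1:ℚ) else -1) * q p : ℚ) : ℝ) = 0 := by
        rw [hq2]; norm_num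
      push_cast at hcast
      rw [Finset.sum_congr rfl fun p _ => hsgncast p] at hcast
      calc ∑ p, (if p.2 then (1:ℝ) else -1) * (m p : ℝ)
          = ∑ p, K * ((if p.2 then (1:ℝ) else -1) * (q p : ℝ)) :=
            Finset.sum_congr rfl fun p _ => by rw [hmr p]; ring
        _ = K * ∑ p, (if p.2 then (1:ℝ) else -1) * (q p : ℝ) := (Finset.mul_sum _ _ _).symm
        _ = 0 := by rw [hcast, mul_zero]
    have hr3 : K * M ≤ ∑ p, ((if p.2 then (1:ℝ) else -1) * f p.1) * (m p : ℝ) := by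
      calc K * M ≤ K * ∑ p, ((if p.2 then (1:ℝ) else -1) * f p.1) * (q p : ℝ) :=
            mul_le_mul_of_nonneg_left hqobj hKnn
        _ = ∑ p, ((if p.2 then (1:ℝ) else -1) * f p.1) * (m p : ℝ) := by
            rw [Finset.mul_sum]
            exact Finset.sum_congr rfl fun p _ => by rw [hmr p]; ring
    have hexp : ∑ p, (m p : ℝ) * (2*M + ε - (if p.2 then (1:ℝ) else -1) * (2 * f p.1 - w))
        = (∑ p, (m p : ℝ)) * (2*M + ε)
          - 2 * (∑ p, ((if p.2 then (1:ℝ) else -1) * f p.1) * (m p : ℝ))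
          + w * (∑ p, (if p.2 then (1:ℝ) else -1) * (m p : ℝ)) := by
      rw [Finset.sum_mul, Finset.mul_sum, Finset.mul_sum, ← Finset.sum_sub_distrib,
        ← Finset.sum_add_distrib]
      exact Finset.sum_congr rfl fun p _ => by ring
    calc ∑ p, (m p : ℝ) * ((M - f (memb p)) + (M + f (Finset.univ \ memb p)))
        ≤ ∑ p, (m p : ℝ) * (2*M + ε - (if p.2 then (1:ℝ) else -1) * (2 * f p.1 - w)) :=
          Finset.sum_le_sum fun p _ =>
            mul_le_mul_of_nonneg_left (hbound p) (Nat.cast_nonneg _)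
      _ ≤ 2 * ((c : ℝ) * (k' : ℝ)) * ε := by
          rw [hexp, hr1, hr2]
          rw [hKdef] at hr3 ⊢
          linarith [hr3]
      _ = 2 * (c * k' : ℝ) * ε := by push_cast; ring
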